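/- Let $r \ge 3$, $s \ge 2$, and $n \ge 2$ be integers with $n \ne r$ and $n \ne r-1$, and set $(b_1, b_2, b_3) = (r, -s, n)$. Then there is no pair of subsets $I, J \subseteq \{1,2,3\}$ satisfying all of the following: (i) $1 \notin I \cap J$; (ii) neither $I$ nor $J$ contains two consecutive indices; (iii) if $1 \in I$ then $\sum_{j \in J} b_j - \sum_{i \in I} b_i = 0$; (iv) if $1 \notin I$ then $\sum_{j \in J} b_j - \big( (\sum_{i \in I} b_i) + 1 \big) = 0$. (By Baker's classification, closed essential surfaces in the exterior of the knot $[b_1, b_2, b_3]$ correspond bijectively to such pairs $(I,J)$; hence the knot $K^n_{r,s} = [r,-s,n]$ is small.) -/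
import Mathlib


/-- For `r ≥ 3`, `s ≥ 2`, `n ≥ 2` with `n ≠ r` and `n ≠ r - 1`, and
`(b 1, b 2, b 3) = (r, -s, n)`, there is no pair of subsets `I, J ⊆ {1,2,3}`
satisfying Baker's conditions (i)–(iv); hence `K^n_{r,s}` is small. -/
theorem stmt4 (r s n : ℤ) (hr : 3 ≤ r) (hs : 2 ≤ s) (hn : 2 ≤ n)
    (hnr : n ≠ r) (hnr' : n ≠ r - 1)
    (b : ℕ → ℤ) (hb1 : b 1 = r) (hb2 : b 2 = -s) (hb3 : b 3 = n) :
    ¬ ∃ I J : Finset ℕ, I ⊆ {1, 2, 3} ∧ J ⊆ {1, 2, 3} ∧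
      ¬ (1 ∈ I ∧ 1 ∈ J) ∧
      (∀ i, ¬ (i ∈ I ∧ i + 1 ∈ I)) ∧
      (∀ i, ¬ (i ∈ J ∧ i + 1 ∈ J)) ∧
      (1 ∈ I → (∑ j ∈ J, b j) - (∑ i ∈ I, b i) = 0) ∧
      (1 ∉ I → (∑ j ∈ J, b j) - ((∑ i ∈ I, b i) + 1) = 0) := by
  rintro ⟨I, J, hI, hJ, h11, hcI, hcJ, hIn, hOut⟩
  have hI' : I ∈ ({1, 2, 3} : Finset ℕ).powerset := Finset.mem_powerset.2 hI
  have hJ' : J ∈ ({1, 2, 3} : Finset ℕ).powerset := Finset.mem_powerset.2 hJ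
  fin_cases hI' <;> fin_cases hJ' <;>
    simp_all [Finset.sum_insert, Finset.mem_insert] <;>
    omega
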